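/- arXiv:2110.14857 — 9 statements merged into one kernel-verified Lean document; each statement's English description precedes it below -/
import Mathlib

section
/- Let g be a pre-Lie algebra over K and λ : g → Der(A) a K-linear map satisfying λ(x·y − y·x) = [λ(x),λ(y)]. Then E = A ⊗ g with product (a⊗x)·(b⊗y) = ab ⊗ x·_g y + a λ(x)(b) ⊗ y and anchor θ(a⊗x)(b) = a λ(x)(b) is a pre-Lie-Rinehart algebra over A. -/
/-- A pre-Lie-Rinehart algebra structure over the commutative `K`-algebra `A`:
an `A`-module `E` with a `K`-bilinear pre-Lie product `mul` and an `A`-linear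
anchor `θ : E → Der(A)` satisfying the compatibility conditions. -/
def IsPreLieRinehart (K : Type*) {A E : Type*} [Field K] [CommRing A] [Algebra K A]
    [AddCommGroup E] [Module K E] [Module A E] [IsScalarTower K A E]
    (mul : E → E → E) (θ : E → Derivation K A A) : Prop :=
  (∀ X Y Z : E, mul (X + Y) Z = mul X Z + mul Y Z) ∧
  (∀ X Y Z : E, mul X (Y + Z) = mul X Y + mul X Z) ∧
  (∀ (k : K) (X Y : E), mul (k • X) Y = k • mul X Y) ∧
  (∀ (k : K) (X Y : E), mul X (k • Y) = k • mul X Y) ∧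
  (∀ X Y Z : E, mul X (mul Y Z) - mul (mul X Y) Z
      = mul Y (mul X Z) - mul (mul Y X) Z) ∧
  (∀ (a : A) (X Y : E), mul X (a • Y) = a • mul X Y + θ X a • Y) ∧
  (∀ (a : A) (X Y : E), mul (a • X) Y = a • mul X Y) ∧
  (∀ X Y : E, θ (X + Y) = θ X + θ Y) ∧
  (∀ (a : A) (X : E), θ (a • X) = a • θ X) ∧
  (∀ X Y : E, θ (mul X Y - mul Y X) = ⁅θ X, θ Y⁆)

/-- A Lie-Rinehart algebra structure over the commutative `K`-algebra `A`:
an `A`-module `E` with a `K`-bilinear Lie bracket `br` and an `A`-linear anchor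
`θ : E → Der(A)` satisfying the Leibniz and anchor conditions. -/
def IsLieRinehart (K : Type*) {A E : Type*} [Field K] [CommRing A] [Algebra K A]
    [AddCommGroup E] [Module K E] [Module A E] [IsScalarTower K A E]
    (br : E → E → E) (θ : E → Derivation K A A) : Prop :=
  (∀ X Y Z : E, br (X + Y) Z = br X Z + br Y Z) ∧
  (∀ X Y Z : E, br X (Y + Z) = br X Y + br X Z) ∧
  (∀ (k : K) (X Y : E), br (k • X) Y = k • br X Y) ∧
  (∀ (k : K) (X Y : E), br X (k • Y) = k • br X Y) ∧
  (∀ X : E, br X X = 0) ∧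
  (∀ X Y Z : E, br X (br Y Z) + br Y (br Z X) + br Z (br X Y) = 0) ∧
  (∀ (a : A) (X Y : E), br X (a • Y) = a • br X Y + θ X a • Y) ∧
  (∀ X Y : E, θ (X + Y) = θ X + θ Y) ∧
  (∀ (a : A) (X : E), θ (a • X) = a • θ X) ∧
  (∀ X Y : E, θ (br X Y) = ⁅θ X, θ Y⁆)

open scoped TensorProduct

/-- the transformation pre-Lie-Rinehart algebra. If a pre-Lie
`K`-algebra `g` acts on `A` via `lam : g → Der(A)` with
`lam (x·y − y·x) = [lam x, lam y]`, then `A ⊗ g` with the product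
`(a⊗x)·(b⊗y) = ab ⊗ x·y + a lam(x)(b) ⊗ y` and anchor `θ(a⊗x)(b) = a lam(x)(b)`
is a pre-Lie-Rinehart algebra over `A`. -/
theorem transformation_isPreLieRinehart {K A g : Type*} [Field K] [CommRing A]
    [Algebra K A] [AddCommGroup g] [Module K g]
    (mul : g →ₗ[K] g →ₗ[K] g)
    (hpre : ∀ x y z : g, mul x (mul y z) - mul (mul x y) z
      = mul y (mul x z) - mul (mul y x) z)
    (lam : g →ₗ[K] Derivation K A A)
    (hlam : ∀ x y : g, lam (mul x y - mul y x) = ⁅lam x, lam y⁆)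
    (P : (A ⊗[K] g) →ₗ[K] (A ⊗[K] g) →ₗ[K] (A ⊗[K] g))
    (θ : (A ⊗[K] g) →ₗ[A] Derivation K A A)
    (hP : ∀ (a b : A) (x y : g),
      P (a ⊗ₜ[K] x) (b ⊗ₜ[K] y)
        = (a * b) ⊗ₜ[K] mul x y + (a * lam x b) ⊗ₜ[K] y)
    (hθ : ∀ (a : A) (x : g) (b : A), θ (a ⊗ₜ[K] x) b = a * lam x b) :
    IsPreLieRinehart K (fun X Y => P X Y) (fun X => θ X) := by
  have hl : ∀ (x y : g) (c : A), lam (mul x y) c - lam (mul y x) c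
      = lam x (lam y c) - lam y (lam x c) := by
    intro x y c
    have := congrArg (fun D : Derivation K A A => D c) (hlam x y)
    simpa [Derivation.commutator_apply] using this
  refine ⟨?_, ?_, ?_, ?_, ?_, ?_, ?_, ?_, ?_, ?_⟩
  · intro X Y Z; dsimp only; simp only [map_add, LinearMap.add_apply]
  · intro X Y Z; dsimp only; simp only [map_add]
  · intro k X Y; dsimp only; simp only [map_smul, LinearMap.smul_apply]
  · intro k X Y; dsimp only; simp only [map_smul]
  · -- pre-Lie identity
    intro X Y Z; dsimp only
    induction X using TensorProduct.induction_on with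
    | zero => simp
    | add u v hu hv =>
        simp only [map_add, LinearMap.add_apply]
        linear_combination (norm := abel) hu + hv
    | tmul a x =>
      induction Y using TensorProduct.induction_on with
      | zero => simp
      | add u v hu hv =>
          simp only [map_add, LinearMap.add_apply]
          linear_combination (norm := abel) hu + hv
      | tmul b y =>
        induction Z using TensorProduct.induction_on with
        | zero => simp
        | add u v hu hv =>
            simp only [map_add, LinearMap.add_apply]
            linear_combination (norm := abel) hu + hv
        | tmul c z =>
          have h1 : (a * b * c) ⊗ₜ[K] (mul x (mul y z)) - (a * b * c) ⊗ₜ[K] (mul (mul x y) z)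
              = (a * b * c) ⊗ₜ[K] (mul y (mul x z)) - (a * b * c) ⊗ₜ[K] (mul (mul y x) z) := by
            rw [← TensorProduct.tmul_sub, ← TensorProduct.tmul_sub, hpre]
          have h2 : (a * b * (lam x (lam y c))) ⊗ₜ[K] z - (a * b * (lam (mul x y) c)) ⊗ₜ[K] z
              = (a * b * (lam y (lam x c))) ⊗ₜ[K] z - (a * b * (lam (mul y x) c)) ⊗ₜ[K] z := by
            rw [← TensorProduct.sub_tmul, ← TensorProduct.sub_tmul]
            congr 1
            linear_combination (-(a*b)) * hl x y c
          simp only [hP, map_add, LinearMap.add_apply, Derivation.leibniz, smul_eq_mul,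
            mul_add, TensorProduct.add_tmul, TensorProduct.tmul_add]
          ring_nf
          linear_combination (norm := abel) h1 + h2
  · -- Leibniz rule
    intro a X Y; dsimp only
    induction X using TensorProduct.induction_on with
    | zero => simp
    | add u v hu hv =>
        simp only [map_add, LinearMap.add_apply, Derivation.add_apply, add_smul, smul_add]
        linear_combination (norm := abel) hu + hv
    | tmul b x =>
      induction Y using TensorProduct.induction_on with
      | zero => simp
      | add u v hu hv =>
          simp only [smul_add, map_add, Derivation.add_apply]
          linear_combination (norm := abel) hu + hv
      | tmul c y =>
        rw [TensorProduct.smul_tmul', smul_eq_mul, hP, hP, hθ]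
        simp only [smul_add, TensorProduct.smul_tmul', smul_eq_mul, Derivation.leibniz,
          mul_add, TensorProduct.add_tmul]
        ring_nf
        abel
  · -- A-linearity in first slot
    intro a X Y; dsimp only
    induction X using TensorProduct.induction_on with
    | zero => simp
    | add u v hu hv =>
        simp only [smul_add, map_add, LinearMap.add_apply]
        linear_combination (norm := abel) hu + hv
    | tmul b x =>
      rw [TensorProduct.smul_tmul', smul_eq_mul]
      induction Y using TensorProduct.induction_on with
      | zero => simp
      | add u v hu hv => simp only [map_add, smul_add, hu, hv]
      | tmul c y =>
          rw [hP, hP, smul_add, TensorProduct.smul_tmul', TensorProduct.smul_tmul',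
            smul_eq_mul, smul_eq_mul]
          ring_nf
  · intro X Y; dsimp only; rw [map_add]
  · intro a X; dsimp only; rw [map_smul]
  · -- anchor condition
    intro X Y; dsimp only
    induction X using TensorProduct.induction_on with
    | zero => simp
    | add u v hu hv =>
        simp only [map_add, map_sub, LinearMap.add_apply, add_lie]
        ext b
        have hu' := congrArg (fun D : Derivation K A A => D b) hu
        have hv' := congrArg (fun D : Derivation K A A => D b) hv
        simp only [map_sub, Derivation.sub_apply] at hu' hv' ⊢
        simp only [Derivation.commutator_apply, Derivation.add_apply, map_add] at hu' hv' ⊢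
        linear_combination hu' + hv'
    | tmul a x =>
      induction Y using TensorProduct.induction_on with
      | zero => simp
      | add u v hu hv =>
          ext b
          have hu' := congrArg (fun D : Derivation K A A => D b) hu
          have hv' := congrArg (fun D : Derivation K A A => D b) hv
          simp only [map_sub, map_add, LinearMap.add_apply, Derivation.sub_apply,
            Derivation.commutator_apply, Derivation.add_apply, lie_add] at hu' hv' ⊢
          linear_combination hu' + hv'
      | tmul c y =>
        ext b
        simp only [map_sub, Derivation.sub_apply, Derivation.commutator_apply, hP,
          map_add, Derivation.add_apply, hθ, Derivation.leibniz, smul_eq_mul]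
        linear_combination (a * c) * hl x y b
end

section
/- Let (E, ·_E) be a pre-Lie algebra over a commutative K-algebra A (with A-bilinear product) and (D, δ) a derivation of E, i.e., D : E → E K-linear, δ ∈ Der(A), D(X·_E Y) = D(X)·_E Y + X·_E D(Y), and D(aX) = δ(a)X + a D(X). Then A ⊕ E is a pre-Lie-Rinehart algebra over A with product (a,X)∗(b,Y) = (a δ(b), X·_E Y + a D(Y)) and anchor θ(a,X) = a δ. -/
/-- given an `A`-bilinear pre-Lie product on `E` and a derivation
`(D, δ)` of `E`, the `A`-module `A ⊕ E` becomes a pre-Lie-Rinehart algebra with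
product `(a,X)∗(b,Y) = (a δ(b), X·Y + a • D(Y))` and anchor `θ(a,X) = a • δ`. -/
theorem derivation_extension_isPreLieRinehart {K A E : Type*} [Field K] [CommRing A]
    [Algebra K A] [AddCommGroup E] [Module K E] [Module A E] [IsScalarTower K A E]
    (mul : E →ₗ[A] E →ₗ[A] E)
    (hpre : ∀ X Y Z : E, mul X (mul Y Z) - mul (mul X Y) Z
      = mul Y (mul X Z) - mul (mul Y X) Z)
    (D : E →ₗ[K] E) (δ : Derivation K A A)
    (hD1 : ∀ X Y : E, D (mul X Y) = mul (D X) Y + mul X (D Y))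
    (hD2 : ∀ (a : A) (X : E), D (a • X) = δ a • X + a • D X) :
    IsPreLieRinehart K
      (fun p q : A × E => (p.1 * δ q.1, mul p.2 q.2 + p.1 • D q.2))
      (fun p : A × E => p.1 • δ) := by
  refine ⟨?_, ?_, ?_, ?_, ?_, ?_, ?_, ?_, ?_, ?_⟩
  · intro X Y Z
    simp only [Prod.fst_add, Prod.snd_add, map_add, LinearMap.add_apply, add_smul,
      Prod.ext_iff]
    exact ⟨by ring, by abel⟩
  · intro X Y Z
    simp only [Prod.fst_add, Prod.snd_add, map_add, smul_add, Prod.ext_iff]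
    exact ⟨by ring, by abel⟩
  · intro k X Y
    simp only [Prod.smul_fst, Prod.smul_snd, Prod.smul_mk, LinearMap.map_smul_of_tower,
      LinearMap.smul_apply, smul_add, smul_mul_assoc, smul_assoc]
  · intro k X Y
    have hδ : δ (k • Y.1) = k • δ Y.1 := map_smul δ.toLinearMap k Y.1
    simp only [Prod.smul_fst, Prod.smul_snd, Prod.smul_mk, hδ,
      LinearMap.map_smul_of_tower, map_smul, smul_add, mul_smul_comm, smul_comm X.1 k]
  · intro X Y Z
    have h := hpre X.2 Y.2 Z.2
    have h2 : mul X.2 (mul Y.2 Z.2)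
        = mul (mul X.2 Y.2) Z.2 + (mul Y.2 (mul X.2 Z.2) - mul (mul Y.2 X.2) Z.2) := by
      rw [← h]; abel
    simp only [Prod.mk_sub_mk, map_add, map_smul, Derivation.leibniz, smul_eq_mul,
      LinearMap.add_apply, LinearMap.map_smul_of_tower, hD1, hD2, smul_add, smul_smul,
      LinearMap.smul_apply, Prod.ext_iff]
    refine ⟨by ring, ?_⟩
    rw [h2, mul_comm Y.1 X.1]
    abel
  · intro a X Y
    simp only [Prod.smul_fst, Prod.smul_snd, Prod.smul_mk, map_smul, Derivation.leibniz,
      smul_eq_mul, hD2, smul_add, smul_smul, Derivation.coe_smul_linearMap,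
      LinearMap.smul_apply, Prod.mk_add_mk, Prod.ext_iff, Derivation.smul_apply,
      Prod.fst_add, Prod.snd_add]
    refine ⟨by ring, ?_⟩
    rw [mul_comm a X.1]
    abel
  · intro a X Y
    simp only [Prod.smul_fst, Prod.smul_snd, Prod.smul_mk, map_smul, smul_add,
      smul_mul_assoc, smul_smul, Prod.ext_iff, LinearMap.smul_apply]
    exact ⟨trivial, rfl⟩
  · intro X Y
    simp only [Prod.fst_add, add_smul]
  · intro a X
    simp only [Prod.smul_fst, mul_smul, smul_eq_mul]
  · intro X Y
    ext c
    simp only [Prod.fst_sub, Prod.mk_sub_mk, Derivation.smul_apply, Derivation.sub_apply,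
      smul_eq_mul, Derivation.commutator_apply, Derivation.leibniz, map_mul]
    ring
end

section
/- Let (E, ·_E, θ_E) be a pre-Lie-Rinehart algebra over A and (𝓔; ρ, μ) a representation of E. Then F = E ⊕ 𝓔 with product (X+u) ∗ (Y+v) = X·_E Y + ρ(X)v + μ(Y)u and anchor θ_F(X+u) = θ_E(X) is a pre-Lie-Rinehart algebra over A (the semidirect product). -/
/-- A representation `(ρ, μ)` of the pre-Lie-Rinehart algebra `(E, mul, θ)` on the
`A`-module `F`: `ρ` is a Lie-Rinehart representation of the sub-adjacent
Lie-Rinehart algebra `E^c` on `F`, `μ(X)` is `A`-linear with `μ` `A`-linear in `X`,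
and `ρ(X)μ(Y) − μ(Y)ρ(X) = μ(X·Y) − μ(Y)μ(X)`. -/
def IsPLRRep (K : Type*) {A E F : Type*} [Field K] [CommRing A] [Algebra K A]
    [AddCommGroup E] [Module K E] [Module A E] [IsScalarTower K A E]
    [AddCommGroup F] [Module K F] [Module A F] [IsScalarTower K A F]
    (mul : E → E → E) (θ : E → Derivation K A A)
    (ρ μ : E → F → F) : Prop :=
  (∀ (X Y : E) (u : F), ρ (X + Y) u = ρ X u + ρ Y u) ∧
  (∀ (X : E) (u v : F), ρ X (u + v) = ρ X u + ρ X v) ∧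
  (∀ (a : A) (X : E) (u : F), ρ (a • X) u = a • ρ X u) ∧
  (∀ (a : A) (X : E) (u : F), ρ X (a • u) = a • ρ X u + θ X a • u) ∧
  (∀ (X Y : E) (u : F), ρ (mul X Y - mul Y X) u = ρ X (ρ Y u) - ρ Y (ρ X u)) ∧
  (∀ (X Y : E) (u : F), μ (X + Y) u = μ X u + μ Y u) ∧
  (∀ (X : E) (u v : F), μ X (u + v) = μ X u + μ X v) ∧
  (∀ (a : A) (X : E) (u : F), μ (a • X) u = a • μ X u) ∧
  (∀ (a : A) (X : E) (u : F), μ X (a • u) = a • μ X u) ∧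
  (∀ (X Y : E) (u : F), ρ X (μ Y u) - μ Y (ρ X u) = μ (mul X Y) u - μ Y (μ X u))

/-- the semidirect product. Given a pre-Lie-Rinehart algebra
`(E, mul, θ)` and a representation `(ρ, μ)` on the `A`-module `F`, the `A`-module
`E ⊕ F` with product `(X+u)∗(Y+v) = X·Y + ρ(X)v + μ(Y)u` and anchor
`θ(X+u) = θ(X)` is a pre-Lie-Rinehart algebra over `A`. -/
theorem semidirect_isPreLieRinehart {K A E F : Type*} [Field K] [CommRing A]
    [Algebra K A]
    [AddCommGroup E] [Module K E] [Module A E] [IsScalarTower K A E]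
    [AddCommGroup F] [Module K F] [Module A F] [IsScalarTower K A F]
    (mul : E → E → E) (θ : E → Derivation K A A)
    (ρ μ : E → F → F)
    (hE : IsPreLieRinehart K mul θ)
    (hrep : IsPLRRep K mul θ ρ μ) :
    IsPreLieRinehart K
      (fun p q : E × F => (mul p.1 q.1, ρ p.1 q.2 + μ q.1 p.2))
      (fun p : E × F => θ p.1) := by
  obtain ⟨e1, e2, e3, e4, e5, e6, e7, e8, e9, e10⟩ := hE
  obtain ⟨r1, r2, r3, r4, r5, r6, r7, r8, r9, r10⟩ := hrep
  -- auxiliary facts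
  have ρsub : ∀ (X Y : E) (u : F), ρ (X - Y) u = ρ X u - ρ Y u := by
    intro X Y u
    have := r1 (X - Y) Y u
    rw [sub_add_cancel] at this
    rw [this]; abel
  have r5' : ∀ (X Y : E) (w : F),
      ρ (mul X Y) w - ρ (mul Y X) w = ρ X (ρ Y w) - ρ Y (ρ X w) := by
    intro X Y w
    rw [← ρsub, r5]
  refine ⟨?_, ?_, ?_, ?_, ?_, ?_, ?_, ?_, ?_, ?_⟩
  · rintro ⟨X, u⟩ ⟨Y, v⟩ ⟨Z, w⟩
    refine Prod.ext ?_ ?_ <;> simp only [Prod.fst_add, Prod.snd_add]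
    · exact e1 X Y Z
    · rw [r1, r7]; abel
  · rintro ⟨X, u⟩ ⟨Y, v⟩ ⟨Z, w⟩
    refine Prod.ext ?_ ?_ <;> simp only [Prod.fst_add, Prod.snd_add]
    · exact e2 X Y Z
    · rw [r2, r6]; abel
  · rintro k ⟨X, u⟩ ⟨Y, v⟩
    refine Prod.ext ?_ ?_ <;> simp only [Prod.smul_fst, Prod.smul_snd]
    · exact e3 k X Y
    · rw [← algebraMap_smul A k X, ← algebraMap_smul A k u, r3, r9,
        ← smul_add, algebraMap_smul]
  · rintro k ⟨X, u⟩ ⟨Y, v⟩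
    refine Prod.ext ?_ ?_ <;> simp only [Prod.smul_fst, Prod.smul_snd]
    · exact e4 k X Y
    · rw [← algebraMap_smul A k Y, ← algebraMap_smul A k v, r4, r8,
        Derivation.map_algebraMap, zero_smul, add_zero, ← smul_add,
        algebraMap_smul]
  · rintro ⟨X, u⟩ ⟨Y, v⟩ ⟨Z, w⟩
    refine Prod.ext ?_ ?_ <;>
      simp only [Prod.fst_sub, Prod.snd_sub]
    · exact e5 X Y Z
    · simp only [r2, r7]
      linear_combination (norm := abel) - r5' X Y w + r10 X Z v - r10 Y Z u
  · rintro a ⟨X, u⟩ ⟨Y, v⟩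
    refine Prod.ext ?_ ?_ <;>
      simp only [Prod.smul_fst, Prod.smul_snd, Prod.fst_add, Prod.snd_add]
    · exact e6 a X Y
    · rw [r4, r8, smul_add]; abel
  · rintro a ⟨X, u⟩ ⟨Y, v⟩
    refine Prod.ext ?_ ?_ <;>
      simp only [Prod.smul_fst, Prod.smul_snd]
    · exact e7 a X Y
    · rw [r3, r9, smul_add]
  · rintro ⟨X, u⟩ ⟨Y, v⟩
    exact e8 X Y
  · rintro a ⟨X, u⟩
    exact e9 a X
  · rintro ⟨X, u⟩ ⟨Y, v⟩
    exact e10 X Y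
end

section
/- Let (E, 𝓔, ∂, (ρ,μ)) be a crossed module for pre-Lie-Rinehart algebras over A. Then for all X ∈ E and u,v ∈ 𝓔: ρ(X)(u·_𝓔 v) = (ρ(X)u)·_𝓔 v + u·_𝓔(ρ(X)v) − (μ(X)u)·_𝓔 v, and μ(X)(u·_𝓔 v) = μ(X)(v·_𝓔 u) + u·_𝓔(μ(X)v) − v·_𝓔(μ(X)u). -/
/-- A crossed module for pre-Lie-Rinehart algebras over `A`: a pre-Lie-Rinehart
algebra `(E, mulE, θ)`, a pre-Lie `K`-algebra `(F, mulF)` which is an `A`-module,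
a representation `(ρ, μ)` of `E` on `F`, and an `A`-linear pre-Lie homomorphism
`par : F → E` such that `par(ρ(X)u) = X·par(u)`, `par(μ(X)u) = par(u)·X`,
`ρ(par u)v = μ(par v)u = u·v`, and `θ ∘ par = 0`. -/
def IsPLRCrossedModule (K : Type*) {A E F : Type*} [Field K] [CommRing A]
    [Algebra K A]
    [AddCommGroup E] [Module K E] [Module A E] [IsScalarTower K A E]
    [AddCommGroup F] [Module K F] [Module A F] [IsScalarTower K A F]
    (mulE : E → E → E) (θ : E → Derivation K A A)
    (mulF : F → F → F) (par : F → E) (ρ μ : E → F → F) : Prop :=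
  IsPreLieRinehart K mulE θ ∧
  -- (F, mulF) is a pre-Lie K-algebra
  (∀ u v w : F, mulF (u + v) w = mulF u w + mulF v w) ∧
  (∀ u v w : F, mulF u (v + w) = mulF u v + mulF u w) ∧
  (∀ (k : K) (u v : F), mulF (k • u) v = k • mulF u v) ∧
  (∀ (k : K) (u v : F), mulF u (k • v) = k • mulF u v) ∧
  (∀ u v w : F, mulF u (mulF v w) - mulF (mulF u v) w
      = mulF v (mulF u w) - mulF (mulF v u) w) ∧
  -- (ρ, μ) is a representation of E on F
  IsPLRRep K mulE θ ρ μ ∧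
  -- par is an A-linear pre-Lie algebra homomorphism
  (∀ u v : F, par (u + v) = par u + par v) ∧
  (∀ (a : A) (u : F), par (a • u) = a • par u) ∧
  (∀ u v : F, par (mulF u v) = mulE (par u) (par v)) ∧
  -- crossed module axioms
  (∀ (X : E) (u : F), par (ρ X u) = mulE X (par u)) ∧
  (∀ (X : E) (u : F), par (μ X u) = mulE (par u) X) ∧
  (∀ u v : F, ρ (par u) v = mulF u v) ∧
  (∀ u v : F, μ (par v) u = mulF u v) ∧
  (∀ u : F, θ (par u) = 0)

/-- in a crossed module `(E, F, par, (ρ,μ))` for pre-Lie-Rinehart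
algebras, `ρ(X)(u·v) = (ρ(X)u)·v + u·(ρ(X)v) − (μ(X)u)·v` and
`μ(X)(u·v) = μ(X)(v·u) + u·(μ(X)v) − v·(μ(X)u)`. -/
theorem crossedModule_derivation_identities {K A E F : Type*} [Field K] [CommRing A]
    [Algebra K A]
    [AddCommGroup E] [Module K E] [Module A E] [IsScalarTower K A E]
    [AddCommGroup F] [Module K F] [Module A F] [IsScalarTower K A F]
    (mulE : E → E → E) (θ : E → Derivation K A A)
    (mulF : F → F → F) (par : F → E) (ρ μ : E → F → F)
    (hcm : IsPLRCrossedModule K mulE θ mulF par ρ μ) :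
    (∀ (X : E) (u v : F),
      ρ X (mulF u v) = mulF (ρ X u) v + mulF u (ρ X v) - mulF (μ X u) v) ∧
    (∀ (X : E) (u v : F),
      μ X (mulF u v) = μ X (mulF v u) + mulF u (μ X v) - mulF v (μ X u)) := by
  obtain ⟨hE, _, _, _, _, _, ⟨r1, r2, r3, r4, r5, m1, m2, m3, m4, r10⟩,
    hp1, hp2, hp3, hr1, hr2, hr3, hr4, hθ⟩ := hcm
  have hsub : ∀ (X Y : E) (w : F), ρ (X - Y) w = ρ X w - ρ Y w := by
    intro X Y w
    rw [sub_eq_add_neg, show (-Y) = (-1 : A) • Y from (neg_one_smul A Y).symm,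
      r1, r3, neg_one_smul, ← sub_eq_add_neg]
  constructor
  · intro X u v
    have h := r5 X (par u) v
    rw [← hr1, ← hr2, hsub] at h; simp only [hr3] at h
    -- h : mulF (ρ X u) v - mulF (μ X u) v = ρ X (mulF u v) - mulF u (ρ X v)
    have h2 : ρ X (mulF u v)
        = mulF (ρ X u) v - mulF (μ X u) v + mulF u (ρ X v) := by
      rw [← sub_eq_iff_eq_add]; exact h.symm
    rw [h2]; abel
  · intro X u v
    have h := r10 (par v) X u
    rw [← hr2] at h; simp only [hr3, hr4] at h
    -- h : mulF v (μ X u) - μ X (mulF v u) = mulF u (μ X v) - μ X (mulF u v)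
    have h2 : μ X (mulF u v)
        = mulF u (μ X v) - mulF v (μ X u) + μ X (mulF v u) := by
      rw [← sub_eq_iff_eq_add]
      have := sub_eq_sub_iff_sub_eq_sub.mp h
      linear_combination (norm := abel) this
    rw [h2]; abel
end

section
/- Let (E, 𝓔, ∂, (ρ,μ)) be a crossed module for pre-Lie-Rinehart algebras over A. Then E ⊕ 𝓔 carries a pre-Lie-Rinehart algebra structure with product (X+u)∗(Y+v) = X·_E Y + ρ(X)v + μ(Y)u + u·_𝓔 v and anchor θ(X+u) = θ_E(X). -/
/-- for a crossed module `(E, F, par, (ρ,μ))` for pre-Lie-Rinehart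
algebras over `A`, the `A`-module `E ⊕ F` carries a pre-Lie-Rinehart algebra
structure with product `(X+u)∗(Y+v) = X·Y + ρ(X)v + μ(Y)u + u·v` and anchor
`θ(X+u) = θ(X)`. -/
theorem crossedModule_semidirect_isPreLieRinehart {K A E F : Type*} [Field K]
    [CommRing A] [Algebra K A]
    [AddCommGroup E] [Module K E] [Module A E] [IsScalarTower K A E]
    [AddCommGroup F] [Module K F] [Module A F] [IsScalarTower K A F]
    (mulE : E → E → E) (θ : E → Derivation K A A)
    (mulF : F → F → F) (par : F → E) (ρ μ : E → F → F)
    (hcm : IsPLRCrossedModule K mulE θ mulF par ρ μ) :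
    IsPreLieRinehart K
      (fun p q : E × F => (mulE p.1 q.1, ρ p.1 q.2 + μ q.1 p.2 + mulF p.2 q.2))
      (fun p : E × F => θ p.1) := by
  obtain ⟨hE, hF1, hF2, hF3, hF4, hF5, hrep, hpadd, hpsmul, hpmul, hpρ, hpμ,
    hρpar, hμpar, hθpar⟩ := hcm
  obtain ⟨hE1, hE2, hE3, hE4, hE5, hE6, hE7, hE8, hE9, hE10⟩ := hE
  obtain ⟨hr1, hr2, hr3, hr4, hr5, hm1, hm2, hm3, hm4, hrm⟩ := hrep
  -- derived facts
  have hρneg : ∀ (X : E) (u : F), ρ (-X) u = -ρ X u := by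
    intro X u
    have := hr3 (-1 : A) X u
    simpa using this
  have hρsub : ∀ (X Y : E) (u : F), ρ (X - Y) u = ρ X u - ρ Y u := by
    intro X Y u
    rw [sub_eq_add_neg, hr1, hρneg, sub_eq_add_neg]
  have hθalg : ∀ (X : E) (k : K), θ X (algebraMap K A k) = 0 := by
    intro X k; exact Derivation.map_algebraMap (θ X) k
  have h1 : ∀ (X Y : E) (w : F),
      ρ X (ρ Y w) = ρ Y (ρ X w) + (ρ (mulE X Y) w - ρ (mulE Y X) w) := by
    intro X Y w
    rw [← hρsub, hr5]; abel
  have h2 : ∀ (X Z : E) (v : F),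
      ρ X (μ Z v) = μ Z (ρ X v) + (μ (mulE X Z) v - μ Z (μ X v)) := by
    intro X Z v
    rw [← hrm]; abel
  have h4 : ∀ (X : E) (v w : F),
      ρ X (mulF v w) = mulF v (ρ X w) + (mulF (ρ X v) w - mulF (μ X v) w) := by
    intro X v w
    rw [← hρpar v w, h1 X (par v) w, ← hpρ X v, ← hpμ X v, hρpar, hρpar, hρpar]
  have h6 : ∀ (Z : E) (u v : F),
      mulF u (μ Z v) = μ Z (mulF u v) + (mulF v (μ Z u) - μ Z (mulF v u)) := by
    intro Z u v
    have h := hrm (par u) Z v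
    rw [hρpar, hρpar, ← hpμ Z u, hμpar, hμpar, sub_eq_iff_eq_add] at h
    rw [h]; abel
  -- Now prove the ten axioms
  refine ⟨?_, ?_, ?_, ?_, ?_, ?_, ?_, ?_, ?_, ?_⟩
  · rintro ⟨X, u⟩ ⟨Y, v⟩ ⟨Z, w⟩
    simp only [Prod.mk_add_mk, Prod.mk.injEq]
    constructor
    · exact hE1 X Y Z
    · rw [hr1, hm2, hF1]; abel
  · rintro ⟨X, u⟩ ⟨Y, v⟩ ⟨Z, w⟩
    simp only [Prod.mk_add_mk, Prod.mk.injEq]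
    constructor
    · exact hE2 X Y Z
    · rw [hr2, hm1, hF2]; abel
  · rintro k ⟨X, u⟩ ⟨Y, v⟩
    simp only [Prod.smul_mk, Prod.mk.injEq, smul_add]
    constructor
    · exact hE3 k X Y
    · rw [hF3, ← algebraMap_smul A k X, hr3, algebraMap_smul,
        ← algebraMap_smul A k u, hm4, algebraMap_smul]
  · rintro k ⟨X, u⟩ ⟨Y, v⟩
    simp only [Prod.smul_mk, Prod.mk.injEq, smul_add]
    constructor
    · exact hE4 k X Y
    · rw [hF4, ← algebraMap_smul A k v, hr4, hθalg, zero_smul, add_zero,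
        algebraMap_smul, ← algebraMap_smul A k Y, hm3, algebraMap_smul]
  · rintro ⟨X, u⟩ ⟨Y, v⟩ ⟨Z, w⟩
    simp only [Prod.mk_sub_mk, Prod.mk.injEq]
    constructor
    · exact hE5 X Y Z
    · have h3 : ∀ (Y Z : E) (u : F),
          μ (mulE Y Z) u = ρ Y (μ Z u) - μ Z (ρ Y u) + μ Z (μ Y u) := by
        intro Y Z u
        rw [hrm]; abel
      have h7 : mulF u (mulF v w)
          = mulF v (mulF u w) + (mulF (mulF u v) w - mulF (mulF v u) w) := by
        have h := hF5 u v w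
        rw [sub_eq_iff_eq_add] at h
        rw [h]; abel
      simp only [hr2, hm2, hF2, hr1, hm1, hF1]
      rw [h1 X Y w, h2 X Z v, h4 X v w, h3 Y Z u, h6 Z u v, h4 Y u w, h7]
      abel
  · rintro a ⟨X, u⟩ ⟨Y, v⟩
    simp only [Prod.smul_mk, Prod.mk_add_mk, Prod.mk.injEq]
    constructor
    · exact hE6 a X Y
    · rw [hr4, hm3]
      rw [show mulF u (a • v) = a • mulF u v by
        rw [← hρpar, hr4, hθpar, Derivation.zero_apply, zero_smul, add_zero,
          hρpar]]
      rw [smul_add, smul_add]; abel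
  · rintro a ⟨X, u⟩ ⟨Y, v⟩
    simp only [Prod.smul_mk, Prod.mk.injEq]
    constructor
    · exact hE7 a X Y
    · rw [hr3, hm4]
      rw [show mulF (a • u) v = a • mulF u v by
        rw [← hμpar, hm4, hμpar]]
      rw [smul_add, smul_add]
  · rintro ⟨X, u⟩ ⟨Y, v⟩
    exact hE8 X Y
  · rintro a ⟨X, u⟩
    exact hE9 a X
  · rintro ⟨X, u⟩ ⟨Y, v⟩
    exact hE10 X Y
end

section
/- Let (E, 𝓔, ∂, (ρ,μ)) be a crossed module for pre-Lie-Rinehart algebras over A. Then (E^c, 𝓔^c, ∂, ρ−μ) is a crossed module for Lie-Rinehart algebras, where E^c and 𝓔^c are the sub-adjacent (Lie-Rinehart, resp. Lie) algebras with brackets given by commutators of the pre-Lie products. -/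
/-- A crossed module for Lie-Rinehart algebras over `A`: a Lie-Rinehart algebra
`(E, brE, θ)`, a Lie `K`-algebra `(F, brF)` which is an `A`-module, a Lie-Rinehart
representation `σ` of `E` on `F` acting by derivations of `brF`, and an
`A`-linear Lie algebra morphism `par : F → E` with `par(σ(X)u) = [X, par u]`,
`σ(par u)v = [u,v]`, and `θ ∘ par = 0`. -/
def IsLRCrossedModule (K : Type*) {A E F : Type*} [Field K] [CommRing A]
    [Algebra K A]
    [AddCommGroup E] [Module K E] [Module A E] [IsScalarTower K A E]
    [AddCommGroup F] [Module K F] [Module A F] [IsScalarTower K A F]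
    (brE : E → E → E) (θ : E → Derivation K A A)
    (brF : F → F → F) (par : F → E) (σ : E → F → F) : Prop :=
  IsLieRinehart K brE θ ∧
  -- (F, brF) is a Lie K-algebra
  (∀ u v w : F, brF (u + v) w = brF u w + brF v w) ∧
  (∀ u v w : F, brF u (v + w) = brF u v + brF u w) ∧
  (∀ (k : K) (u v : F), brF (k • u) v = k • brF u v) ∧
  (∀ (k : K) (u v : F), brF u (k • v) = k • brF u v) ∧
  (∀ u : F, brF u u = 0) ∧
  (∀ u v w : F, brF u (brF v w) + brF v (brF w u) + brF w (brF u v) = 0) ∧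
  -- σ is a Lie-Rinehart representation of E on F
  (∀ (X Y : E) (u : F), σ (X + Y) u = σ X u + σ Y u) ∧
  (∀ (X : E) (u v : F), σ X (u + v) = σ X u + σ X v) ∧
  (∀ (a : A) (X : E) (u : F), σ (a • X) u = a • σ X u) ∧
  (∀ (a : A) (X : E) (u : F), σ X (a • u) = a • σ X u + θ X a • u) ∧
  (∀ (X Y : E) (u : F), σ (brE X Y) u = σ X (σ Y u) - σ Y (σ X u)) ∧
  -- par is an A-linear Lie algebra morphism
  (∀ u v : F, par (u + v) = par u + par v) ∧
  (∀ (a : A) (u : F), par (a • u) = a • par u) ∧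
  (∀ u v : F, par (brF u v) = brE (par u) (par v)) ∧
  -- crossed module axioms
  (∀ (X : E) (u : F), par (σ X u) = brE X (par u)) ∧
  (∀ u v : F, σ (par u) v = brF u v) ∧
  (∀ u : F, θ (par u) = 0) ∧
  -- σ(X) acts by derivations of the bracket of F
  (∀ (X : E) (u v : F), σ X (brF u v) = brF (σ X u) v + brF u (σ X v))

/-- a crossed module `(E, F, par, (ρ,μ))` for pre-Lie-Rinehart
algebras yields a crossed module `(E^c, F^c, par, ρ − μ)` for Lie-Rinehart
algebras, where the sub-adjacent brackets are the commutators of the pre-Lie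
products. -/
theorem crossedModule_subAdjacent {K A E F : Type*} [Field K] [CommRing A]
    [Algebra K A]
    [AddCommGroup E] [Module K E] [Module A E] [IsScalarTower K A E]
    [AddCommGroup F] [Module K F] [Module A F] [IsScalarTower K A F]
    (mulE : E → E → E) (θ : E → Derivation K A A)
    (mulF : F → F → F) (par : F → E) (ρ μ : E → F → F)
    (hcm : IsPLRCrossedModule K mulE θ mulF par ρ μ) :
    IsLRCrossedModule K
      (fun X Y => mulE X Y - mulE Y X) θ
      (fun u v => mulF u v - mulF v u) par
      (fun X u => ρ X u - μ X u) := by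
  obtain ⟨hE, f1, f2, f3, f4, f5, hrep, p1, p2, p3, q1, q2, q3, q4, q5⟩ := hcm
  obtain ⟨e1, e2, e3, e4, e5, e6, e7, e8, e9, e10⟩ := hE
  obtain ⟨r1, r2, r3, r4, r5, m1, m2, m3, m4, rm⟩ := hrep
  -- subtraction versions of additivity
  have mE1 : ∀ X Y Z : E, mulE (X - Y) Z = mulE X Z - mulE Y Z := fun X Y Z =>
    (AddMonoidHom.mk' (fun W => mulE W Z) (fun a b => e1 a b Z)).map_sub X Y
  have mE2 : ∀ X Y Z : E, mulE X (Y - Z) = mulE X Y - mulE X Z := fun X Y Z =>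
    (AddMonoidHom.mk' (fun W => mulE X W) (fun a b => e2 X a b)).map_sub Y Z
  have mF1 : ∀ u v w : F, mulF (u - v) w = mulF u w - mulF v w := fun u v w =>
    (AddMonoidHom.mk' (fun z => mulF z w) (fun a b => f1 a b w)).map_sub u v
  have mF2 : ∀ u v w : F, mulF u (v - w) = mulF u v - mulF u w := fun u v w =>
    (AddMonoidHom.mk' (fun z => mulF u z) (fun a b => f2 u a b)).map_sub v w
  have rsub1 : ∀ (X Y : E) (u : F), ρ (X - Y) u = ρ X u - ρ Y u := fun X Y u =>
    (AddMonoidHom.mk' (fun W => ρ W u) (fun a b => r1 a b u)).map_sub X Y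
  have rsub2 : ∀ (X : E) (u v : F), ρ X (u - v) = ρ X u - ρ X v := fun X u v =>
    (AddMonoidHom.mk' (fun z => ρ X z) (fun a b => r2 X a b)).map_sub u v
  have msub1 : ∀ (X Y : E) (u : F), μ (X - Y) u = μ X u - μ Y u := fun X Y u =>
    (AddMonoidHom.mk' (fun W => μ W u) (fun a b => m1 a b u)).map_sub X Y
  have msub2 : ∀ (X : E) (u v : F), μ X (u - v) = μ X u - μ X v := fun X u v =>
    (AddMonoidHom.mk' (fun z => μ X z) (fun a b => m2 X a b)).map_sub u v
  have psub : ∀ u v : F, par (u - v) = par u - par v := fun u v =>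
    (AddMonoidHom.mk' par p1).map_sub u v
  -- key identities for the derivation property
  have keyA : ∀ (X : E) (u v : F),
      ρ X (mulF u v) = mulF (ρ X u) v - mulF (μ X u) v + mulF u (ρ X v) := by
    intro X u v
    have h := r5 X (par u) v
    rw [rsub1, ← q1 X u, ← q2 X u] at h
    simp only [q3] at h
    exact eq_add_of_sub_eq h.symm
  have keyC : ∀ (X : E) (u v : F),
      μ X (mulF u v) = mulF u (μ X v) - mulF v (μ X u) + μ X (mulF v u) := by
    intro X u v
    have h := rm (par u) X v
    rw [← q2 X u] at h
    simp only [q3, q4] at h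
    -- h : mulF u (μ X v) - μ X (mulF u v) = mulF v (μ X u) - μ X (mulF v u)
    have h2 : μ X (mulF u v)
        = mulF u (μ X v) - (mulF v (μ X u) - μ X (mulF v u)) := by
      rw [← h]; abel
    rw [h2]; abel
  refine ⟨⟨?_, ?_, ?_, ?_, ?_, ?_, ?_, ?_, ?_, ?_⟩, ?_, ?_, ?_, ?_, ?_, ?_, ?_, ?_, ?_, ?_, ?_, ?_, ?_, ?_, ?_, ?_, ?_, ?_⟩
  -- Lie-Rinehart on E
  · intro X Y Z; simp only [e1, e2]; abel
  · intro X Y Z; simp only [e1, e2]; abel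
  · intro k X Y; simp only [e3, e4, smul_sub]
  · intro k X Y; simp only [e3, e4, smul_sub]
  · intro X; exact sub_self _
  · -- Jacobi on E
    intro X Y Z
    simp only [mE1, mE2]
    have h1 := eq_add_of_sub_eq (e5 X Y Z)
    have h2 := eq_add_of_sub_eq (e5 Y Z X)
    have h3 := eq_add_of_sub_eq (e5 Z X Y)
    rw [h1, h2, h3]; abel
  · intro a X Y; beta_reduce; rw [e6, e7, smul_sub]; abel
  · exact e8
  · exact e9
  · exact e10
  -- Lie algebra on F
  · intro u v w; simp only [f1, f2]; abel
  · intro u v w; simp only [f1, f2]; abel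
  · intro k u v; simp only [f3, f4, smul_sub]
  · intro k u v; simp only [f3, f4, smul_sub]
  · intro u; exact sub_self _
  · intro u v w
    simp only [mF1, mF2]
    have h1 := eq_add_of_sub_eq (f5 u v w)
    have h2 := eq_add_of_sub_eq (f5 v w u)
    have h3 := eq_add_of_sub_eq (f5 w u v)
    rw [h1, h2, h3]; abel
  -- σ is a representation
  · intro X Y u; simp only [r1, m1]; abel
  · intro X u v; simp only [r2, m2]; abel
  · intro a X u; simp only [r3, m3, smul_sub]
  · intro a X u; simp only [r4, m4, smul_sub]; abel
  · intro X Y u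
    simp only [rsub2, msub2, msub1, r5]
    have h1 := eq_add_of_sub_eq (rm X Y u)
    have h2 := eq_add_of_sub_eq (rm Y X u)
    rw [h1, h2]; abel
  -- par is a morphism
  · exact p1
  · exact p2
  · intro u v; beta_reduce; rw [psub, p3, p3]
  -- crossed module axioms
  · intro X u; beta_reduce; rw [psub, q1, q2]
  · intro u v; beta_reduce; rw [q3, q4]
  · exact q5
  -- derivation property
  · intro X u v
    simp only [mF1, mF2, rsub2, msub2]
    rw [keyA X u v, keyA X v u, keyC X u v]
    abel
end

section
/- There is a one-to-one correspondence between strict pre-Lie-Rinehart 2-algebras over A and crossed modules for pre-Lie-Rinehart algebras over A: given a strict pre-Lie-Rinehart 2-algebra (P₀,P₁,m₁,m₂,m₃=0,θ), the product u·v := m₂(m₁(u),v) makes P₁ a pre-Lie algebra, m₁ is an A-linear pre-Lie morphism, (ρ,μ) given by ρ(X⁰)u = m₂(X⁰,u), μ(X⁰)u = m₂(u,X⁰) is a representation, and (P₀,P₁,m₁,(ρ,μ)) is a crossed module; conversely every crossed module arises this way. -/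
/-- A pre-Lie-Rinehart 2-algebra over `A`: a 2-term complex `m1 : P1 → P0` of
`A`-modules, structure maps `m200 : P0×P0 → P0`, `m201 : P0×P1 → P1`,
`m210 : P1×P0 → P1` (the components of `m₂`), `m3 : P0×P0×P0 → P1` (skew in its
first two arguments), and an `A`-linear anchor `θ : P0 → Der(A)`, satisfying the
pre-Lie 2-algebra axioms (a)-(f) together with the Rinehart compatibility
conditions (i)-(v). -/
def IsPreLieRinehart2 (K : Type*) {A P0 P1 : Type*} [Field K] [CommRing A]
    [Algebra K A]
    [AddCommGroup P0] [Module K P0] [Module A P0] [IsScalarTower K A P0]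
    [AddCommGroup P1] [Module K P1] [Module A P1] [IsScalarTower K A P1]
    (m1 : P1 → P0) (m200 : P0 → P0 → P0) (m201 : P0 → P1 → P1)
    (m210 : P1 → P0 → P1) (m3 : P0 → P0 → P0 → P1)
    (θ : P0 → Derivation K A A) : Prop :=
  -- m1 is A-linear
  (∀ u v : P1, m1 (u + v) = m1 u + m1 v) ∧
  (∀ (a : A) (u : P1), m1 (a • u) = a • m1 u) ∧
  -- biadditivity of the components of m₂
  (∀ X Y Z : P0, m200 (X + Y) Z = m200 X Z + m200 Y Z) ∧
  (∀ X Y Z : P0, m200 X (Y + Z) = m200 X Y + m200 X Z) ∧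
  (∀ (X Y : P0) (u : P1), m201 (X + Y) u = m201 X u + m201 Y u) ∧
  (∀ (X : P0) (u v : P1), m201 X (u + v) = m201 X u + m201 X v) ∧
  (∀ (u v : P1) (X : P0), m210 (u + v) X = m210 u X + m210 v X) ∧
  (∀ (u : P1) (X Y : P0), m210 u (X + Y) = m210 u X + m210 u Y) ∧
  -- Rinehart conditions (i) and (ii) for m₂
  (∀ (a : A) (X Y : P0), m200 X (a • Y) = a • m200 X Y + θ X a • Y) ∧
  (∀ (a : A) (X Y : P0), m200 (a • X) Y = a • m200 X Y) ∧
  (∀ (a : A) (X : P0) (u : P1), m201 X (a • u) = a • m201 X u + θ X a • u) ∧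
  (∀ (a : A) (X : P0) (u : P1), m201 (a • X) u = a • m201 X u) ∧
  (∀ (a : A) (u : P1) (X : P0), m210 u (a • X) = a • m210 u X) ∧
  (∀ (a : A) (u : P1) (X : P0), m210 (a • u) X = a • m210 u X) ∧
  -- m3 is A-trilinear and skew-symmetric in its first two arguments
  (∀ W X Y Z : P0, m3 (W + X) Y Z = m3 W Y Z + m3 X Y Z) ∧
  (∀ W X Y Z : P0, m3 W (X + Y) Z = m3 W X Z + m3 W Y Z) ∧
  (∀ W X Y Z : P0, m3 W X (Y + Z) = m3 W X Y + m3 W X Z) ∧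
  (∀ (a : A) (X Y Z : P0), m3 (a • X) Y Z = a • m3 X Y Z) ∧
  (∀ (a : A) (X Y Z : P0), m3 X (a • Y) Z = a • m3 X Y Z) ∧
  (∀ (a : A) (X Y Z : P0), m3 X Y (a • Z) = a • m3 X Y Z) ∧
  (∀ X Y Z : P0, m3 X Y Z = - m3 Y X Z) ∧
  -- axiom (a): m1 m2(x, m) = m2(x, m1 m)
  (∀ (X : P0) (u : P1), m1 (m201 X u) = m200 X (m1 u)) ∧
  -- axiom (b): m1 m2(m, x) = m2(m1 m, x)
  (∀ (u : P1) (X : P0), m1 (m210 u X) = m200 (m1 u) X) ∧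
  -- axiom (c): m2(m1 m, n) = m2(m, m1 n)
  (∀ u v : P1, m201 (m1 u) v = m210 u (m1 v)) ∧
  -- axiom (e₁)
  (∀ X Y Z : P0, m1 (m3 X Y Z)
      = m200 X (m200 Y Z) - m200 (m200 X Y) Z
        - m200 Y (m200 X Z) + m200 (m200 Y X) Z) ∧
  -- axiom (e₂)
  (∀ (X Y : P0) (u : P1), m3 X Y (m1 u)
      = m201 X (m201 Y u) - m201 (m200 X Y) u
        - m201 Y (m201 X u) + m201 (m200 Y X) u) ∧
  -- axiom (e₃)
  (∀ (u : P1) (X Y : P0), m3 (m1 u) X Y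
      = m210 u (m200 X Y) - m210 (m210 u X) Y
        - m201 X (m210 u Y) + m210 (m201 X u) Y) ∧
  -- axiom (f)
  (∀ W X Y Z : P0,
      m201 W (m3 X Y Z) - m201 X (m3 W Y Z) + m201 Y (m3 W X Z)
        + m210 (m3 X Y W) Z - m210 (m3 W Y X) Z + m210 (m3 W X Y) Z
        - m3 X Y (m200 W Z) + m3 W Y (m200 X Z) - m3 W X (m200 Y Z)
        - m3 (m200 W X - m200 X W) Y Z + m3 (m200 W Y - m200 Y W) X Z
        - m3 (m200 X Y - m200 Y X) W Z = 0) ∧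
  -- the anchor θ is A-linear and satisfies (iv), (v)
  (∀ X Y : P0, θ (X + Y) = θ X + θ Y) ∧
  (∀ (a : A) (X : P0), θ (a • X) = a • θ X) ∧
  (∀ X Y : P0, θ (m200 X Y - m200 Y X) = ⁅θ X, θ Y⁆) ∧
  (∀ u : P1, θ (m1 u) = 0)

section Helpers

variable {M N : Type*} [AddCommGroup M] [AddCommGroup N]

private lemma myMapZero {f : M → N} (h : ∀ x y, f (x + y) = f x + f y) :
    f 0 = 0 := (AddMonoidHom.mk' f h).map_zero

private lemma myMapSub {f : M → N} (h : ∀ x y, f (x + y) = f x + f y) (x y : M) :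
    f (x - y) = f x - f y := (AddMonoidHom.mk' f h).map_sub x y

private lemma rearr1 {a b c d : M} (h : (0 : M) = a - b - c + d) : a - b = c - d := by
  have h' : a - b - c + d = 0 := h.symm
  calc a - b = (a - b - c + d) + (c - d) := by abel
    _ = c - d := by rw [h', zero_add]

private lemma rearr2 {a b c d : M} (h : (0 : M) = a - b - c + d) : b - d = a - c := by
  have h' : a - b - c + d = 0 := h.symm
  calc b - d = -(a - b - c + d) + (a - c) := by abel
    _ = a - c := by rw [h', neg_zero, zero_add]

private lemma rearr3 {a b c d : M} (h : a - b = c - d) : (0 : M) = a - b - c + d := by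
  have : a - b - c + d = (a - b) - (c - d) := by abel
  rw [this, h, sub_self]

private lemma rearr4 {a b c d : M} (h : b - d = a - c) : (0 : M) = a - b - c + d := by
  have : a - b - c + d = (a - c) - (b - d) := by abel
  rw [this, h, sub_self]

end Helpers

/-- the one-to-one correspondence between strict pre-Lie-Rinehart
2-algebras over `A` and crossed modules for pre-Lie-Rinehart algebras over `A`:
the data `(m1, m200, m201, m210, θ)` is a strict pre-Lie-Rinehart 2-algebra
(`m3 = 0`) if and only if `(P0, P1, ∂ = m1, (ρ, μ))` is a crossed module for
pre-Lie-Rinehart algebras, where the pre-Lie product on `P1` is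
`u·v = m2(m1 u, v)`, `ρ(X)u = m2(X,u)` and `μ(X)u = m2(u,X)`. -/
theorem strictPreLieRinehart2_iff_crossedModule {K A P0 P1 : Type*} [Field K]
    [CommRing A] [Algebra K A]
    [AddCommGroup P0] [Module K P0] [Module A P0] [IsScalarTower K A P0]
    [AddCommGroup P1] [Module K P1] [Module A P1] [IsScalarTower K A P1]
    (m1 : P1 → P0) (m200 : P0 → P0 → P0) (m201 : P0 → P1 → P1)
    (m210 : P1 → P0 → P1) (θ : P0 → Derivation K A A) :
    IsPreLieRinehart2 K m1 m200 m201 m210 (fun _ _ _ => (0 : P1)) θ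
    ↔ IsPLRCrossedModule K m200 θ
        (fun u v => m201 (m1 u) v) m1 m201 (fun X u => m210 u X) := by
  constructor
  · rintro ⟨h1add, h1sm, h2a, h2b, h2c, h2d, h2e, h2f, hA1, hA2, hA3, hA4, hA5, hA6,
      -, -, -, -, -, -, -, ha, hb, hc, he1, he2, he3, -, hθ1, hθ2, hθ3, hθ4⟩
    have hθalg : ∀ (X : P0) (k : K), θ X (algebraMap K A k) = 0 :=
      fun X k => Derivation.map_algebraMap (θ X) k
    have h1k : ∀ (k : K) (u : P1), m1 (k • u) = k • m1 u := by
      intro k u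
      rw [← algebraMap_smul A k u, h1sm, algebraMap_smul]
    have h200kX : ∀ (k : K) (X Y : P0), m200 (k • X) Y = k • m200 X Y := by
      intro k X Y
      rw [← algebraMap_smul A k X, hA2, algebraMap_smul]
    have h200kY : ∀ (k : K) (X Y : P0), m200 X (k • Y) = k • m200 X Y := by
      intro k X Y
      rw [← algebraMap_smul A k Y, hA1, hθalg, zero_smul, add_zero, algebraMap_smul]
    have h201kX : ∀ (k : K) (X : P0) (u : P1), m201 (k • X) u = k • m201 X u := by
      intro k X u
      rw [← algebraMap_smul A k X, hA4, algebraMap_smul]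
    have h201ku : ∀ (k : K) (X : P0) (u : P1), m201 X (k • u) = k • m201 X u := by
      intro k X u
      rw [← algebraMap_smul A k u, hA3, hθalg, zero_smul, add_zero, algebraMap_smul]
    have he2' : ∀ (X Y : P0) (u : P1), (0 : P1)
        = m201 X (m201 Y u) - m201 (m200 X Y) u
          - m201 Y (m201 X u) + m201 (m200 Y X) u := fun X Y u => he2 X Y u
    have he3' : ∀ (u : P1) (X Y : P0), (0 : P1)
        = m210 u (m200 X Y) - m210 (m210 u X) Y
          - m201 X (m210 u Y) + m210 (m201 X u) Y := fun u X Y => he3 u X Y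
    have hpre0 : ∀ X Y Z : P0, m200 X (m200 Y Z) - m200 (m200 X Y) Z
        = m200 Y (m200 X Z) - m200 (m200 Y X) Z := by
      intro X Y Z
      refine rearr1 ?_
      have h0 : (0 : P0) = m1 0 := (myMapZero h1add).symm
      rw [h0]
      exact he1 X Y Z
    refine ⟨⟨h2a, h2b, h200kX, h200kY, hpre0, hA1, hA2, hθ1, hθ2, hθ3⟩,
      ?_, ?_, ?_, ?_, ?_,
      ⟨h2c, h2d, fun a X u => hA4 a X u, fun a X u => hA3 a X u, ?_,
        fun X Y u => h2f u X Y, fun X u v => h2e u v X,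
        fun a X u => hA5 a u X, fun a X u => hA6 a u X, ?_⟩,
      h1add, h1sm, ?_, ?_, ?_, ?_, ?_, hθ4⟩
    · -- mulF additive in first argument
      intro u v w
      show m201 (m1 (u + v)) w = m201 (m1 u) w + m201 (m1 v) w
      rw [h1add, h2c]
    · -- mulF additive in second argument
      intro u v w
      exact h2d (m1 u) v w
    · -- mulF K-linear in first argument
      intro k u v
      show m201 (m1 (k • u)) v = k • m201 (m1 u) v
      rw [h1k, h201kX]
    · -- mulF K-linear in second argument
      intro k u v
      exact h201ku k (m1 u) v
    · -- pre-Lie identity for mulF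
      intro u v w
      show m201 (m1 u) (m201 (m1 v) w) - m201 (m1 (m201 (m1 u) v)) w
          = m201 (m1 v) (m201 (m1 u) w) - m201 (m1 (m201 (m1 v) u)) w
      rw [ha, ha]
      exact rearr1 (he2' (m1 u) (m1 v) w)
    · -- representation: ρ of the commutator bracket
      intro X Y u
      show m201 (m200 X Y - m200 Y X) u = m201 X (m201 Y u) - m201 Y (m201 X u)
      have hsplit : m201 (m200 X Y - m200 Y X) u
          = m201 (m200 X Y) u - m201 (m200 Y X) u :=
        myMapSub (f := fun Z => m201 Z u) (fun x y => h2c x y u) (m200 X Y) (m200 Y X)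
      rw [hsplit]
      exact rearr2 (he2' X Y u)
    · -- representation: compatibility of ρ and μ
      intro X Y u
      exact (rearr1 (he3' u X Y)).symm
    · -- m1 preserves products
      intro u v
      exact ha (m1 u) v
    · -- ∂(ρ(X)u) = X ∂u
      intro X u
      exact ha X u
    · -- ∂(μ(X)u) = ∂u X
      intro X u
      exact hb u X
    · -- ρ(∂u)v = u·v
      intro u v
      rfl
    · -- μ(∂v)u = u·v
      intro u v
      exact (hc u v).symm
  · rintro ⟨⟨e1, e2, e3, e4, e5, e6, e7, e8, e9, e10⟩, hF1, hF2, hF3, hF4, hF5,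
      ⟨r1, r2, r3, r4, r5, r6, r7, r8, r9, r10⟩, hp1, hp2, hp3, hc1, hc2, hc3, hc4, hc5⟩
    have h201z : ∀ X : P0, m201 X 0 = 0 := fun X => myMapZero (r2 X)
    have h210z : ∀ X : P0, m210 0 X = 0 :=
      fun X => myMapZero (f := fun u => m210 u X) (fun u v => r7 X u v)
    refine ⟨hp1, hp2, e1, e2, r1, r2, fun u v X => r7 X u v, fun u X Y => r6 X Y u,
      e6, e7, fun a X u => r4 a X u, fun a X u => r3 a X u,
      fun a u X => r8 a X u, fun a u X => r9 a X u,
      ?_, ?_, ?_, ?_, ?_, ?_, ?_, fun X u => hc1 X u, fun u X => hc2 X u,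
      ?_, ?_, ?_, ?_, ?_, e8, e9, e10, fun u => hc5 u⟩
    · intro W X Y Z; simp
    · intro W X Y Z; simp
    · intro W X Y Z; simp
    · intro a X Y Z; simp
    · intro a X Y Z; simp
    · intro a X Y Z; simp
    · intro X Y Z; simp
    · -- axiom (c)
      intro u v
      exact (hc4 u v).symm
    · -- axiom (e₁)
      intro X Y Z
      show m1 (0 : P1) = _
      rw [myMapZero hp1]
      exact rearr3 (e5 X Y Z)
    · -- axiom (e₂)
      intro X Y u
      show (0 : P1) = m201 X (m201 Y u) - m201 (m200 X Y) u
          - m201 Y (m201 X u) + m201 (m200 Y X) u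
      refine rearr4 ?_
      have hsplit : m201 (m200 X Y - m200 Y X) u
          = m201 (m200 X Y) u - m201 (m200 Y X) u :=
        myMapSub (f := fun Z => m201 Z u) (fun x y => r1 x y u) (m200 X Y) (m200 Y X)
      rw [← hsplit]
      exact r5 X Y u
    · -- axiom (e₃)
      intro u X Y
      show (0 : P1) = m210 u (m200 X Y) - m210 (m210 u X) Y
          - m201 X (m210 u Y) + m210 (m201 X u) Y
      exact rearr3 (r10 X Y u).symm
    · -- axiom (f)
      intro W X Y Z
      simp only [h201z, h210z]
      abel
end

section
/- Let Dₙ = {∂₁,…,∂ₙ} be pairwise commuting derivations of a commutative K-algebra A, and let ADₙ = {Σᵢ aᵢ∂ᵢ : aᵢ ∈ A}. Then the operation (a∂ᵢ)·(b∂ⱼ) = a∂ᵢ(b)∂ⱼ together with the inclusion ADₙ → Der(A) as anchor makes ADₙ a pre-Lie-Rinehart algebra over A. -/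
/-- let `d 1, …, d n` be pairwise commuting derivations of `A`
(regarded as linearly independent, so that `A·Dₙ` is the free `A`-module
`Fin n → A` of coefficient tuples). Then the product
`(Σᵢ aᵢ∂ᵢ)·(Σⱼ bⱼ∂ⱼ) = Σ_{i,j} aᵢ ∂ᵢ(bⱼ) ∂ⱼ`, together with the inclusion
`Σᵢ aᵢ∂ᵢ ↦ Σᵢ aᵢ • ∂ᵢ ∈ Der(A)` as anchor, makes `A·Dₙ` a pre-Lie-Rinehart
algebra over `A`. -/
theorem commutingDerivations_isPreLieRinehart {K A : Type*} [Field K] [CommRing A]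
    [Algebra K A] (n : ℕ) (d : Fin n → Derivation K A A)
    (hcomm : ∀ i j, ⁅d i, d j⁆ = 0) :
    IsPreLieRinehart K
      (fun c e : Fin n → A => fun j => ∑ i, c i * (d i) (e j))
      (fun c : Fin n → A => ∑ i, c i • d i) := by
  have hc : ∀ i j a, d i (d j a) = d j (d i a) := by
    intro i j a
    have h := congrArg (fun D : Derivation K A A => D a) (hcomm i j)
    simpa [Derivation.commutator_apply, sub_eq_zero] using h
  have hθ : ∀ (c : Fin n → A) (a : A), (∑ i, c i • d i) a = ∑ i, c i * d i a := by
    intro c a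
    induction (Finset.univ : Finset (Fin n)) using Finset.induction_on with
    | empty => simp
    | insert _ _ h ih => simp [Finset.sum_insert h, ih, smul_eq_mul]
  refine ⟨?_, ?_, ?_, ?_, ?_, ?_, ?_, ?_, ?_, ?_⟩
  · intro X Y Z
    funext j
    simp [Pi.add_apply, add_mul, Finset.sum_add_distrib]
  · intro X Y Z
    funext j
    simp [Pi.add_apply, mul_add, Finset.sum_add_distrib]
  · intro k X Y
    funext j
    simp [Pi.smul_apply, Finset.smul_sum, smul_mul_assoc]
  · intro k X Y
    funext j
    simp [Pi.smul_apply, Finset.smul_sum, mul_smul_comm]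
  · intro X Y Z
    funext j
    simp only [Pi.sub_apply]
    have expand : ∀ (U V : Fin n → A),
        (∑ i, U i * d i (∑ m, V m * d m (Z j)))
          - (∑ m, (∑ i, U i * d i (V m)) * d m (Z j))
        = ∑ i, ∑ m, U i * V m * d i (d m (Z j)) := by
      intro U V
      have h1 : ∀ i, U i * d i (∑ m, V m * d m (Z j))
          = (∑ m, U i * (d i (V m) * d m (Z j))) + ∑ m, U i * (V m * d i (d m (Z j))) := by
        intro i
        rw [map_sum, Finset.mul_sum, ← Finset.sum_add_distrib]
        exact Finset.sum_congr rfl fun m _ => by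
          rw [Derivation.leibniz, smul_eq_mul, smul_eq_mul]; ring
      rw [Finset.sum_congr rfl fun i _ => h1 i, Finset.sum_add_distrib]
      have h2 : ∑ m, (∑ i, U i * d i (V m)) * d m (Z j)
          = ∑ i, ∑ m, U i * (d i (V m) * d m (Z j)) := by
        simp only [Finset.sum_mul]
        rw [Finset.sum_comm]
        exact Finset.sum_congr rfl fun i _ => Finset.sum_congr rfl fun m _ => by ring
      rw [h2]
      have h3 : (∑ i, ∑ m, U i * (V m * d i (d m (Z j))))
          = ∑ i, ∑ m, U i * V m * d i (d m (Z j)) :=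
        Finset.sum_congr rfl fun i _ => Finset.sum_congr rfl fun m _ => by ring
      rw [h3]
      abel
    rw [expand X Y, expand Y X, Finset.sum_comm (f := fun i m => Y i * X m * d i (d m (Z j)))]
    refine Finset.sum_congr rfl fun i _ => Finset.sum_congr rfl fun m _ => ?_
    rw [hc i m]
    ring
  · intro a X Y
    funext j
    simp only [Pi.add_apply, Pi.smul_apply, smul_eq_mul, hθ]
    rw [Finset.sum_mul, Finset.mul_sum, ← Finset.sum_add_distrib]
    refine Finset.sum_congr rfl fun i _ => ?_
    rw [Derivation.leibniz, smul_eq_mul, smul_eq_mul]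
    ring
  · intro a X Y
    funext j
    simp only [Pi.smul_apply, smul_eq_mul, Finset.mul_sum]
    refine Finset.sum_congr rfl fun i _ => by ring
  · intro X Y
    simp [Pi.add_apply, add_smul, Finset.sum_add_distrib]
  · intro a X
    simp [Pi.smul_apply, Finset.smul_sum, smul_smul]
  · intro X Y
    ext a
    simp only [Derivation.commutator_apply, hθ]
    have key : ∀ (U V : Fin n → A),
        (∑ i, U i * d i (∑ m, V m * d m a))
        = ∑ i, ∑ m, (U i * d i (V m) * d m a + U i * V m * d i (d m a)) := by
      intro U V
      refine Finset.sum_congr rfl fun i _ => ?_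
      rw [map_sum, Finset.mul_sum]
      refine Finset.sum_congr rfl fun m _ => ?_
      rw [Derivation.leibniz, smul_eq_mul, smul_eq_mul]
      ring
    rw [key X Y, key Y X]
    simp only [Pi.sub_apply, sub_mul, Finset.sum_sub_distrib, Finset.sum_mul,
      Finset.sum_add_distrib]
    rw [Finset.sum_comm (f := fun i m => X m * d m (Y i) * d i a)]
    rw [Finset.sum_comm (f := fun i m => Y m * d m (X i) * d i a)]
    have : (∑ i, ∑ m, Y i * X m * d i (d m a)) = ∑ i, ∑ m, X i * Y m * d i (d m a) := by
      rw [Finset.sum_comm]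
      refine Finset.sum_congr rfl fun i _ => Finset.sum_congr rfl fun m _ => ?_
      rw [hc m i]; ring
    rw [this]
    abel
end

section
/- Let A be a commutative associative K-algebra with a derivation ∂. Then the product x∗y = x·(∂y) makes A a pre-Lie algebra, and together with the anchor θ(x)(y) = x·(∂y), the triple (A, ∗, θ) is a pre-Lie-Rinehart algebra over A. -/
/-- for a commutative associative `K`-algebra `A` with a derivation
`D`, the product `x∗y = x·D(y)` together with the anchor `θ(x) = x • D` (so that
`θ(x)(y) = x·D(y)`) makes `(A, ∗, θ)` a pre-Lie-Rinehart algebra over `A`;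
in particular `∗` is a pre-Lie product on `A`. -/
theorem derivation_mul_isPreLieRinehart {K A : Type*} [Field K] [CommRing A]
    [Algebra K A] (D : Derivation K A A) :
    IsPreLieRinehart K
      (fun x y : A => x * D y)
      (fun x : A => x • D) := by
  refine ⟨?_, ?_, ?_, ?_, ?_, ?_, ?_, ?_, ?_, ?_⟩
  · intro X Y Z; ring
  · intro X Y Z; simp [map_add]; ring
  · intro k X Y; simp [smul_mul_assoc]
  · intro k X Y; simp [mul_smul_comm]
  · intro X Y Z
    simp only [Derivation.leibniz, smul_eq_mul]
    ring
  · intro a X Y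
    simp only [smul_eq_mul, Derivation.leibniz, Derivation.smul_apply]
    ring
  · intro a X Y; simp [smul_eq_mul]; ring
  · intro X Y; ext a; simp [add_smul]
  · intro a X; ext b; simp [mul_smul, smul_eq_mul, mul_assoc]
  · intro X Y
    ext a
    simp only [Derivation.smul_apply, map_sub, Derivation.leibniz, smul_eq_mul,
      Derivation.commutator_apply]
    ring
end
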